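/- Correctness of the reduction: let the Set Cover instance satisfy ⋃_{S ∈ 𝒮} S = U, let q > 2 · (|𝒮| + Σ_{S ∈ 𝒮} |S|), and let k ≥ 1. If A* ⊆ A is feasible and minimizes obj_k among all feasible subsets of A, then 𝒞* := {S ∈ 𝒮 | P_S ⊆ A*} is a minimum-size set cover of U, i.e., ⋃_{S ∈ 𝒞*} S = U and |𝒞*| ≤ |𝒞| for every 𝒞 ⊆ 𝒮 with ⋃_{S ∈ 𝒞} S = U. -/

import Mathlib

/-- Vertices of the graph constructed from a Set Cover instance with universe `U`,
family of sets indexed by `ι`, and path-length parameter `q`: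
`item u` is `v_u`, `path i j` is `v^j_{S_i}`, and `sink` is `z`. -/
inductive Vtx (U ι : Type) (q : ℕ) : Type where
  | item : U → Vtx U ι q
  | path : ι → Fin (q + 1) → Vtx U ι q
  | sink : Vtx U ι q
  deriving DecidableEq, Fintype

variable {U ι : Type} [Fintype U] [Fintype ι] [DecidableEq U] [DecidableEq ι]

/-- The arcs `A_U = {(v_u, v^0_S) | S ∈ 𝒮, u ∈ S}`. -/
def AU (Sets : ι → Finset U) (q : ℕ) : Finset (Vtx U ι q × Vtx U ι q) :=
  Finset.univ.biUnion fun i => (Sets i).image fun u => (Vtx.item u, Vtx.path i 0)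

/-- The path `P_S = {(v^0_S,v^1_S), …, (v^{q-1}_S,v^q_S), (v^q_S, z)}` for `S = S_i`. -/
def Ppath (U ι : Type) [DecidableEq U] [DecidableEq ι] (q : ℕ) (i : ι) :
    Finset (Vtx U ι q × Vtx U ι q) :=
  ((Finset.univ : Finset (Fin q)).image fun j =>
      ((Vtx.path i j.castSucc : Vtx U ι q), Vtx.path i j.succ)) ∪
    {(Vtx.path i (Fin.last q), Vtx.sink)}

/-- The arc set `A = A_U ∪ ⋃_{S ∈ 𝒮} P_S`. -/
def arcs (Sets : ι → Finset U) (q : ℕ) : Finset (Vtx U ι q × Vtx U ι q) :=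
  AU Sets q ∪ Finset.univ.biUnion (Ppath U ι q)

/-- There is a directed path from `x` to `y` all of whose arcs lie in `A'`. -/
def Reaches {α : Type} (A' : Finset (α × α)) (x y : α) : Prop :=
  Relation.ReflTransGen (fun a b => (a, b) ∈ A') x y

/-- `A' ⊆ A` is feasible if every `v_u` can reach `z` using only arcs of `A'`. -/
def Feasible {q : ℕ} (A' : Finset (Vtx U ι q × Vtx U ι q)) : Prop :=
  ∀ u : U, Reaches A' (Vtx.item u) Vtx.sink

/-- The number of arcs of `B` incident to `v` (in-degree plus out-degree). -/
def deg {α : Type} [DecidableEq α] (B : Finset (α × α)) (v : α) : ℕ :=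
  (B.filter fun a => a.1 = v).card + (B.filter fun a => a.2 = v).card

/-- The linecard objective `obj_k(B) = Σ_v ⌈deg_B(v)/k⌉`. -/
def obj {α : Type} [Fintype α] [DecidableEq α] (k : ℕ) (B : Finset (α × α)) : ℕ :=
  ∑ v : α, deg B v ⌈/⌉ k

set_option linter.unusedSectionVars false

/-! ### Auxiliary lemmas about `⌈/⌉` on `ℕ` -/

lemma my_ceilDiv_le_self {k d : ℕ} (hk : 1 ≤ k) : d ⌈/⌉ k ≤ d :=
  (ceilDiv_le_iff_le_mul hk).2 (Nat.le_mul_of_pos_left d hk)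

lemma my_one_le_ceilDiv {k d : ℕ} (hk : 1 ≤ k) (hd : 1 ≤ d) : 1 ≤ d ⌈/⌉ k := by
  by_contra h
  have := (ceilDiv_le_iff_le_mul (show (0:ℕ) < k by omega)).1 (show d ⌈/⌉ k ≤ 0 by omega)
  omega

lemma my_ceilDiv_mono {a b k : ℕ} (h : a ≤ b) : a ⌈/⌉ k ≤ b ⌈/⌉ k := by
  rw [Nat.ceilDiv_eq_add_pred_div, Nat.ceilDiv_eq_add_pred_div]
  exact Nat.div_le_div_right (by omega)

lemma my_ceilDiv_add_le {k : ℕ} (hk : 1 ≤ k) (a b : ℕ) :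
    (a + b) ⌈/⌉ k ≤ a ⌈/⌉ k + b ⌈/⌉ k := by
  rw [ceilDiv_le_iff_le_mul hk, mul_add]
  exact add_le_add (by simpa using le_smul_ceilDiv (show (0:ℕ) < k from hk) (b := a))
    (by simpa using le_smul_ceilDiv (show (0:ℕ) < k from hk) (b := b))

/-! ### Auxiliary lemmas about `deg` and `obj` -/

lemma sum_deg {α : Type} [Fintype α] [DecidableEq α] (B : Finset (α × α)) :
    ∑ v : α, deg B v = 2 * B.card := by
  unfold deg
  rw [Finset.sum_add_distrib]
  have h1 : ∑ v : α, (B.filter fun a => a.1 = v).card = B.card :=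
    (Finset.card_eq_sum_card_fiberwise (fun a _ => Finset.mem_univ a.1)).symm
  have h2 : ∑ v : α, (B.filter fun a => a.2 = v).card = B.card :=
    (Finset.card_eq_sum_card_fiberwise (fun a _ => Finset.mem_univ a.2)).symm
  omega

lemma obj_le_two_card {α : Type} [Fintype α] [DecidableEq α] {k : ℕ} (hk : 1 ≤ k)
    (B : Finset (α × α)) : obj k B ≤ 2 * B.card := by
  calc obj k B ≤ ∑ v : α, deg B v :=
        Finset.sum_le_sum fun v _ => my_ceilDiv_le_self hk
    _ = 2 * B.card := sum_deg B

lemma deg_union_le {α : Type} [DecidableEq α] (B C : Finset (α × α)) (v : α) :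
    deg (B ∪ C) v ≤ deg B v + deg C v := by
  unfold deg
  rw [Finset.filter_union, Finset.filter_union]
  have := Finset.card_union_le (B.filter fun a => a.1 = v) (C.filter fun a => a.1 = v)
  have := Finset.card_union_le (B.filter fun a => a.2 = v) (C.filter fun a => a.2 = v)
  omega

lemma obj_union_le {α : Type} [Fintype α] [DecidableEq α] {k : ℕ} (hk : 1 ≤ k)
    (B C : Finset (α × α)) : obj k (B ∪ C) ≤ obj k B + obj k C := by
  calc obj k (B ∪ C) ≤ ∑ v : α, (deg B v + deg C v) ⌈/⌉ k :=
        Finset.sum_le_sum fun v _ => my_ceilDiv_mono (deg_union_le B C v)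
    _ ≤ ∑ v : α, (deg B v ⌈/⌉ k + deg C v ⌈/⌉ k) :=
        Finset.sum_le_sum fun v _ => my_ceilDiv_add_le hk _ _
    _ = obj k B + obj k C := Finset.sum_add_distrib

lemma obj_empty {α : Type} [Fintype α] [DecidableEq α] (k : ℕ) :
    obj k (∅ : Finset (α × α)) = 0 := by
  simp [obj, deg]

lemma obj_biUnion_le {α ι' : Type} [Fintype α] [DecidableEq α] [DecidableEq ι'] {k : ℕ}
    (hk : 1 ≤ k) (s : Finset ι') (f : ι' → Finset (α × α)) :
    obj k (s.biUnion f) ≤ ∑ i ∈ s, obj k (f i) := by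
  induction s using Finset.induction_on with
  | empty => simp [obj_empty]
  | @insert x s hx ih =>
    rw [Finset.biUnion_insert, Finset.sum_insert hx]
    exact (obj_union_le hk _ _).trans (by omega)

/-! ### Structure of the arc set -/

lemma mem_Ppath {q : ℕ} {i : ι} {a : Vtx U ι q × Vtx U ι q} :
    a ∈ Ppath U ι q i ↔
      (∃ t : Fin q, a = (Vtx.path i t.castSucc, Vtx.path i t.succ)) ∨
        a = (Vtx.path i (Fin.last q), Vtx.sink) := by
  rw [or_comm]
  simp [Ppath, eq_comm]

lemma arcs_out_item {Sets : ι → Finset U} {q : ℕ} {u : U} {w : Vtx U ι q}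
    (h : (Vtx.item u, w) ∈ arcs Sets q) : ∃ i, u ∈ Sets i ∧ w = Vtx.path i 0 := by
  rcases Finset.mem_union.1 h with h | h
  · simp only [AU, Finset.mem_biUnion, Finset.mem_image, Finset.mem_univ, true_and] at h
    obtain ⟨i, u', hu', he⟩ := h
    obtain ⟨h1, h2⟩ := Prod.mk.injEq .. ▸ he
    cases h1
    exact ⟨i, hu', h2.symm⟩
  · simp only [Finset.mem_biUnion, Finset.mem_univ, true_and] at h
    obtain ⟨i, hi⟩ := h
    rw [mem_Ppath] at hi
    rcases hi with ⟨t, ht⟩ | ht <;> simp_all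

lemma arcs_out_path {Sets : ι → Finset U} {q : ℕ} {i : ι} {j : Fin (q + 1)} {w : Vtx U ι q}
    (h : (Vtx.path i j, w) ∈ arcs Sets q) :
    (∃ t : Fin q, j = t.castSucc ∧ w = Vtx.path i t.succ) ∨
      (j = Fin.last q ∧ w = Vtx.sink) := by
  rcases Finset.mem_union.1 h with h | h
  · simp only [AU, Finset.mem_biUnion, Finset.mem_image, Finset.mem_univ, true_and] at h
    obtain ⟨_, _, _, he⟩ := h
    simp at he
  · simp only [Finset.mem_biUnion, Finset.mem_univ, true_and] at h
    obtain ⟨i', hi⟩ := h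
    rw [mem_Ppath] at hi
    rcases hi with ⟨t, ht⟩ | ht
    · obtain ⟨h1, h2⟩ := Prod.mk.injEq .. ▸ ht
      obtain ⟨hii, hjj⟩ := Vtx.path.injEq .. ▸ h1
      subst hii
      exact Or.inl ⟨t, hjj, h2⟩
    · obtain ⟨h1, h2⟩ := Prod.mk.injEq .. ▸ ht
      obtain ⟨hii, hjj⟩ := Vtx.path.injEq .. ▸ h1
      subst hii
      exact Or.inr ⟨hjj, h2⟩

lemma path_mem_Ppath_left {q : ℕ} (i : ι) (t : Fin q) :
    (Vtx.path i t.castSucc, Vtx.path i t.succ) ∈ Ppath U ι q i :=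
  mem_Ppath.2 (Or.inl ⟨t, rfl⟩)

lemma path_mem_Ppath_last {q : ℕ} (i : ι) :
    ((Vtx.path i (Fin.last q) : Vtx U ι q), Vtx.sink) ∈ Ppath U ι q i :=
  mem_Ppath.2 (Or.inr rfl)

/-! ### Reachability lemmas -/

lemma reach_forces {Sets : ι → Finset U} {q : ℕ} {Astar : Finset (Vtx U ι q × Vtx U ι q)}
    (hA : Astar ⊆ arcs Sets q) (i : ι) :
    ∀ n : ℕ, ∀ j : Fin (q + 1), q - (j : ℕ) = n →
      Reaches Astar (Vtx.path i j) Vtx.sink →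
      (∀ t : Fin q, (j : ℕ) ≤ (t : ℕ) →
          (Vtx.path i t.castSucc, Vtx.path i t.succ) ∈ Astar) ∧
        ((Vtx.path i (Fin.last q) : Vtx U ι q), Vtx.sink) ∈ Astar := by
  intro n
  induction n using Nat.strong_induction_on with
  | _ n ih =>
    intro j hjn hre
    rcases (Relation.ReflTransGen.cases_head hre) with heq | ⟨w, hw, hre'⟩
    · exact absurd heq (by simp)
    · rcases arcs_out_path (hA hw) with ⟨t, rfl, rfl⟩ | ⟨rfl, rfl⟩
      · have htq : (t : ℕ) < q := t.isLt
        have hlt : q - ((t.succ : Fin (q+1)) : ℕ) < n := by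
          simp only [Fin.val_succ, Fin.coe_castSucc] at *; omega
        obtain ⟨h1, h2⟩ := ih _ hlt t.succ rfl hre'
        refine ⟨fun t' ht' => ?_, h2⟩
        rcases eq_or_lt_of_le ht' with heq | hlt'
        · have : t' = t := Fin.ext (by simpa using heq.symm)
          subst this; exact hw
        · exact h1 t' (by simp only [Fin.val_succ, Fin.coe_castSucc] at *; omega)
      · refine ⟨fun t' ht' => ?_, hw⟩
        have := t'.isLt
        simp only [Fin.val_last] at ht'
        omega

lemma Ppath_subset_of_reach {Sets : ι → Finset U} {q : ℕ}
    {Astar : Finset (Vtx U ι q × Vtx U ι q)} (hA : Astar ⊆ arcs Sets q) {i : ι}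
    (hre : Reaches Astar (Vtx.path i 0) Vtx.sink) : Ppath U ι q i ⊆ Astar := by
  obtain ⟨h1, h2⟩ := reach_forces hA i (q - ((0 : Fin (q+1)) : ℕ)) 0 rfl hre
  intro a ha
  rcases mem_Ppath.1 ha with ⟨t, rfl⟩ | rfl
  · exact h1 t (by simp)
  · exact h2

lemma reach_of_Ppath {q : ℕ} {B : Finset (Vtx U ι q × Vtx U ι q)} {i : ι}
    (hP : Ppath U ι q i ⊆ B) :
    ∀ n : ℕ, ∀ j : Fin (q + 1), (j : ℕ) + n = q → Reaches B (Vtx.path i j) Vtx.sink := by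
  intro n
  induction n with
  | zero =>
    intro j hj
    have : j = Fin.last q := Fin.ext (by simpa using hj)
    subst this
    exact Relation.ReflTransGen.single (hP (path_mem_Ppath_last i))
  | succ n ih =>
    intro j hj
    have hjq : (j : ℕ) < q := by omega
    set t : Fin q := ⟨(j : ℕ), hjq⟩ with ht
    have hjt : j = t.castSucc := Fin.ext rfl
    refine Relation.ReflTransGen.head ?_ (ih t.succ (by simp [ht]; omega))
    rw [hjt]
    exact hP (path_mem_Ppath_left i t)

/-! ### Bounding `obj` of a single path -/

lemma Ppath_fst_card_le {q : ℕ} (i : ι) (v : Vtx U ι q) :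
    ((Ppath U ι q i).filter fun a => a.1 = v).card ≤ 1 := by
  refine Finset.card_le_one.2 fun a ha b hb => ?_
  obtain ⟨ha1, ha2⟩ := Finset.mem_filter.1 ha
  obtain ⟨hb1, hb2⟩ := Finset.mem_filter.1 hb
  rcases mem_Ppath.1 ha1 with ⟨t, rfl⟩ | rfl <;> rcases mem_Ppath.1 hb1 with ⟨s, rfl⟩ | rfl <;>
      simp only at ha2 hb2 <;> rw [← hb2] at ha2
  · have : t = s := by
      have := Vtx.path.injEq .. ▸ ha2
      exact Fin.castSucc_injective q this.2
    rw [this]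
  · have := (Vtx.path.injEq .. ▸ ha2).2
    have h1 : (t.castSucc : ℕ) = q := by rw [this]; simp
    have := t.isLt
    simp only [Fin.coe_castSucc] at h1
    omega
  · have := (Vtx.path.injEq .. ▸ ha2).2
    have h1 : (s.castSucc : ℕ) = q := by rw [← this]; simp
    have := s.isLt
    simp only [Fin.coe_castSucc] at h1
    omega

lemma Ppath_snd_card_le {q : ℕ} (i : ι) (v : Vtx U ι q) :
    ((Ppath U ι q i).filter fun a => a.2 = v).card ≤ 1 := by
  refine Finset.card_le_one.2 fun a ha b hb => ?_
  obtain ⟨ha1, ha2⟩ := Finset.mem_filter.1 ha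
  obtain ⟨hb1, hb2⟩ := Finset.mem_filter.1 hb
  rcases mem_Ppath.1 ha1 with ⟨t, rfl⟩ | rfl <;> rcases mem_Ppath.1 hb1 with ⟨s, rfl⟩ | rfl <;>
      simp only at ha2 hb2 <;> rw [← hb2] at ha2
  · have : t = s := by
      have := (Vtx.path.injEq .. ▸ ha2).2
      exact Fin.succ_injective q this
    rw [this]
  · simp at ha2
  · simp at ha2

lemma deg_Ppath_le_two {q : ℕ} (i : ι) (v : Vtx U ι q) : deg (Ppath U ι q i) v ≤ 2 := by
  have := Ppath_fst_card_le i v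
  have := Ppath_snd_card_le i v
  unfold deg; omega

lemma deg_Ppath_sink_le_one {q : ℕ} (i : ι) : deg (Ppath U ι q i) Vtx.sink ≤ 1 := by
  have h1 : ((Ppath U ι q i).filter fun a => a.1 = Vtx.sink) = ∅ :=
    Finset.filter_eq_empty_iff.2 fun {a} ha => by
      rcases mem_Ppath.1 ha with ⟨t, rfl⟩ | rfl <;> simp
  have := Ppath_snd_card_le i (Vtx.sink : Vtx U ι q)
  unfold deg; rw [h1]; simpa

lemma deg_Ppath_ne {q : ℕ} (i : ι) (v : Vtx U ι q)
    (h1 : ∀ j : Fin (q + 1), v ≠ Vtx.path i j) (h2 : v ≠ Vtx.sink) :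
    deg (Ppath U ι q i) v = 0 := by
  have hf : ((Ppath U ι q i).filter fun a => a.1 = v) = ∅ :=
    Finset.filter_eq_empty_iff.2 fun {a} ha => by
      rcases mem_Ppath.1 ha with ⟨t, rfl⟩ | rfl <;>
        simp only [] <;> exact fun he => (h1 _ he.symm).elim
  have hs : ((Ppath U ι q i).filter fun a => a.2 = v) = ∅ :=
    Finset.filter_eq_empty_iff.2 fun {a} ha => by
      rcases mem_Ppath.1 ha with ⟨t, rfl⟩ | rfl
      · exact fun he => (h1 _ he.symm).elim
      · exact fun he => (h2 he.symm).elim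
  unfold deg; rw [hf, hs]; simp

lemma obj_Ppath_le {q k : ℕ} (hk : 1 ≤ k) (i : ι) :
    obj k (Ppath U ι q i) ≤ (q + 1) * (2 ⌈/⌉ k) + 1 := by
  classical
  set T : Finset (Vtx U ι q) :=
    (Finset.univ.image fun j : Fin (q + 1) => Vtx.path i j) ∪ {Vtx.sink} with hT
  have hzero : ∀ v ∈ (Finset.univ : Finset (Vtx U ι q)), v ∉ T →
      deg (Ppath U ι q i) v ⌈/⌉ k = 0 := by
    intro v _ hv
    rw [hT, Finset.mem_union, Finset.mem_image] at hv
    push_neg at hv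
    rw [deg_Ppath_ne i v (fun j he => hv.1 j (Finset.mem_univ j) he.symm)
      (by simpa using hv.2)]
    simp
  have heq : obj k (Ppath U ι q i) = ∑ v ∈ T, deg (Ppath U ι q i) v ⌈/⌉ k :=
    (Finset.sum_subset (Finset.subset_univ T) hzero).symm
  rw [heq, hT]
  have hdisj : Disjoint (Finset.univ.image fun j : Fin (q + 1) => Vtx.path i j)
      ({(Vtx.sink : Vtx U ι q)} : Finset (Vtx U ι q)) := by
    simp [Finset.disjoint_singleton_right]
  rw [Finset.sum_union hdisj, Finset.sum_singleton]
  have hb1 : ∑ v ∈ (Finset.univ.image fun j : Fin (q + 1) => Vtx.path i j),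
      deg (Ppath U ι q i) v ⌈/⌉ k ≤ (q + 1) * (2 ⌈/⌉ k) := by
    calc ∑ v ∈ (Finset.univ.image fun j : Fin (q + 1) => Vtx.path i j),
          deg (Ppath U ι q i) v ⌈/⌉ k
        ≤ ∑ _v ∈ (Finset.univ.image fun j : Fin (q + 1) => Vtx.path i j), 2 ⌈/⌉ k :=
          Finset.sum_le_sum fun v _ => my_ceilDiv_mono (deg_Ppath_le_two i v)
      _ = (Finset.univ.image fun j : Fin (q + 1) => Vtx.path i j).card * (2 ⌈/⌉ k) := by
          rw [Finset.sum_const, smul_eq_mul]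
      _ ≤ (q + 1) * (2 ⌈/⌉ k) := by
          apply Nat.mul_le_mul_right
          simpa using Finset.card_image_le
            (s := (Finset.univ : Finset (Fin (q + 1)))) (f := fun j => Vtx.path i j)
  have hb2 : deg (Ppath U ι q i) (Vtx.sink : Vtx U ι q) ⌈/⌉ k ≤ 1 :=
    (my_ceilDiv_mono (deg_Ppath_sink_le_one i)).trans (by simpa using my_ceilDiv_le_self hk (d := 1))
  omega

/-- Correctness of the reduction: let the Set Cover instance satisfy `⋃_{S ∈ 𝒮} S = U`, let
`q > 2 · (|𝒮| + Σ_{S ∈ 𝒮} |S|)`, and let `k ≥ 1`. If `A* ⊆ A` is feasible and minimizes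
`obj_k` among all feasible subsets of `A`, then `𝒞* := {S ∈ 𝒮 | P_S ⊆ A*}` is a
minimum-size set cover of `U`. -/
theorem reduction_correctness (Sets : ι → Finset U) (q : ℕ)
    (hU : ∀ u : U, ∃ i : ι, u ∈ Sets i)
    (hq : q > 2 * (Fintype.card ι + ∑ i : ι, (Sets i).card))
    (k : ℕ) (hk : 1 ≤ k)
    (Astar : Finset (Vtx U ι q × Vtx U ι q)) (hAstar : Astar ⊆ arcs Sets q)
    (hfeas : Feasible Astar)
    (hmin : ∀ B ⊆ arcs Sets q, Feasible B → obj k Astar ≤ obj k B) :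
    (∀ u : U, ∃ i ∈ Finset.univ.filter (fun i : ι => Ppath U ι q i ⊆ Astar), u ∈ Sets i) ∧
    ∀ 𝒞 : Finset ι, (∀ u : U, ∃ i ∈ 𝒞, u ∈ Sets i) →
      (Finset.univ.filter fun i : ι => Ppath U ι q i ⊆ Astar).card ≤ 𝒞.card := by
  classical
  have hq1 : 1 ≤ q := by omega
  set Cstar := Finset.univ.filter (fun i : ι => Ppath U ι q i ⊆ Astar) with hCstar
  -- part 1 : `Cstar` is a cover
  have hcover : ∀ u : U, ∃ i ∈ Cstar, u ∈ Sets i := by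
    intro u
    rcases Relation.ReflTransGen.cases_head (hfeas u) with heq | ⟨w, hw, hre⟩
    · exact absurd heq (by simp)
    · obtain ⟨i, hu, rfl⟩ := arcs_out_item (hAstar hw)
      exact ⟨i, Finset.mem_filter.2 ⟨Finset.mem_univ i, Ppath_subset_of_reach hAstar hre⟩, hu⟩
  refine ⟨hcover, ?_⟩
  intro 𝒞 h𝒞
  choose f hf1 hf2 using h𝒞
  set I : Finset (Vtx U ι q × Vtx U ι q) :=
    Finset.univ.image fun u => (Vtx.item u, Vtx.path (f u) 0) with hI
  set B := I ∪ 𝒞.biUnion (Ppath U ι q) with hB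
  have hBsub : B ⊆ arcs Sets q := by
    apply Finset.union_subset
    · intro a ha
      obtain ⟨u, _, rfl⟩ := Finset.mem_image.1 ha
      apply Finset.mem_union_left
      simp only [AU, Finset.mem_biUnion, Finset.mem_univ, true_and, Finset.mem_image]
      exact ⟨f u, u, hf2 u, rfl⟩
    · exact (Finset.biUnion_subset_biUnion_of_subset_left _ (Finset.subset_univ 𝒞)).trans
        Finset.subset_union_right
  have hBfeas : Feasible B := by
    intro u
    have hPB : Ppath U ι q (f u) ⊆ B := fun a ha =>
      Finset.mem_union_right _ (Finset.mem_biUnion.2 ⟨f u, hf1 u, ha⟩)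
    refine Relation.ReflTransGen.head ?_ (reach_of_Ppath hPB q 0 (by simp))
    exact Finset.mem_union_left _ (Finset.mem_image_of_mem _ (Finset.mem_univ u))
  -- upper bound for `obj k B`
  set p := 2 ⌈/⌉ k with hp
  have hp1 : 1 ≤ p := my_one_le_ceilDiv hk (by norm_num)
  have hp2 : p ≤ 2 := my_ceilDiv_le_self hk
  have hUb : obj k B ≤ 2 * Fintype.card U + 𝒞.card * ((q + 1) * p + 1) := by
    calc obj k B ≤ obj k I + obj k (𝒞.biUnion (Ppath U ι q)) := obj_union_le hk I _
      _ ≤ 2 * I.card + ∑ i ∈ 𝒞, obj k (Ppath U ι q i) :=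
          add_le_add (obj_le_two_card hk I) (obj_biUnion_le hk 𝒞 _)
      _ ≤ 2 * Fintype.card U + 𝒞.card * ((q + 1) * p + 1) := by
          refine add_le_add ?_ ?_
          · apply Nat.mul_le_mul_left
            rw [hI]
            simpa using Finset.card_image_le (s := (Finset.univ : Finset U))
              (f := fun u => ((Vtx.item u : Vtx U ι q), Vtx.path (f u) 0))
          · calc ∑ i ∈ 𝒞, obj k (Ppath U ι q i) ≤ ∑ _i ∈ 𝒞, ((q + 1) * p + 1) :=
                Finset.sum_le_sum fun i _ => obj_Ppath_le hk i
              _ = 𝒞.card * ((q + 1) * p + 1) := by rw [Finset.sum_const, smul_eq_mul]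
  -- lower bound for `obj k Astar`
  have hLb : Cstar.card * (q * p + 1) ≤ obj k Astar := by
    have hsum : ∀ i ∈ Cstar, q * p + 1 ≤ ∑ j : Fin (q + 1), deg Astar (Vtx.path i j) ⌈/⌉ k := by
      intro i hi
      have hP : Ppath U ι q i ⊆ Astar := (Finset.mem_filter.1 hi).2
      have hbound : ∀ j : Fin (q + 1),
          (if j = 0 then 1 else p) ≤ deg Astar (Vtx.path i j) ⌈/⌉ k := by
        intro j
        by_cases hj0 : j = 0
        · subst hj0
          rw [if_pos rfl]
          apply my_one_le_ceilDiv hk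
          set t0 : Fin q := ⟨0, by omega⟩ with ht0
          have harc := hP (path_mem_Ppath_left i t0)
          have h0 : t0.castSucc = (0 : Fin (q + 1)) := Fin.ext rfl
          rw [h0] at harc
          have hmem : (Vtx.path i (0 : Fin (q+1)), Vtx.path i t0.succ) ∈
              Astar.filter fun a => a.1 = Vtx.path i (0 : Fin (q+1)) :=
            Finset.mem_filter.2 ⟨harc, rfl⟩
          have := Finset.card_pos.2 ⟨_, hmem⟩
          unfold deg; omega
        · rw [if_neg hj0]
          have hjv : 1 ≤ (j : ℕ) := by
            rcases Nat.eq_zero_or_pos (j : ℕ) with h | h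
            · exact absurd (Fin.ext (by simpa using h) : j = 0) hj0
            · exact h
          have hjq : (j : ℕ) ≤ q := by have := j.isLt; omega
          -- in-arc
          set t : Fin q := ⟨(j : ℕ) - 1, by omega⟩ with ht
          have hts : t.succ = j := Fin.ext (by simp [ht]; omega)
          have hin := hP (path_mem_Ppath_left i t)
          rw [hts] at hin
          have hinmem : (Vtx.path i t.castSucc, Vtx.path i j) ∈
              Astar.filter fun a => a.2 = Vtx.path i j :=
            Finset.mem_filter.2 ⟨hin, rfl⟩
          -- out-arc
          have hout : ∃ w, (Vtx.path i j, w) ∈ Astar := by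
            rcases Nat.lt_or_ge (j : ℕ) q with hlt | hge
            · set t' : Fin q := ⟨(j : ℕ), hlt⟩ with ht'
              have htc : t'.castSucc = j := Fin.ext rfl
              have := hP (path_mem_Ppath_left i t')
              rw [htc] at this
              exact ⟨_, this⟩
            · have hjl : j = Fin.last q := Fin.ext (by simp; omega)
              have := hP (path_mem_Ppath_last i)
              rw [← hjl] at this
              exact ⟨_, this⟩
          obtain ⟨w, hw⟩ := hout
          have houtmem : (Vtx.path i j, w) ∈ Astar.filter fun a => a.1 = Vtx.path i j :=
            Finset.mem_filter.2 ⟨hw, rfl⟩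
          have hc1 := Finset.card_pos.2 ⟨_, hinmem⟩
          have hc2 := Finset.card_pos.2 ⟨_, houtmem⟩
          have hdeg : 2 ≤ deg Astar (Vtx.path i j) := by unfold deg; omega
          exact (my_ceilDiv_mono hdeg).trans_eq' hp
      calc q * p + 1 = ∑ j : Fin (q + 1), (if j = 0 then 1 else p) := by
            rw [Fin.sum_univ_succ]
            simp [Fin.succ_ne_zero, Finset.sum_const, mul_comm]
            omega
        _ ≤ ∑ j : Fin (q + 1), deg Astar (Vtx.path i j) ⌈/⌉ k :=
            Finset.sum_le_sum fun j _ => hbound j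
    have hinj : ∀ x ∈ Cstar ×ˢ (Finset.univ : Finset (Fin (q + 1))),
        ∀ y ∈ Cstar ×ˢ (Finset.univ : Finset (Fin (q + 1))),
        (fun x : ι × Fin (q + 1) => (Vtx.path x.1 x.2 : Vtx U ι q)) x =
          (fun x : ι × Fin (q + 1) => (Vtx.path x.1 x.2 : Vtx U ι q)) y → x = y := by
      intro x _ y _ hxy
      simp only [Vtx.path.injEq] at hxy
      exact Prod.ext hxy.1 hxy.2
    calc Cstar.card * (q * p + 1) = ∑ _i ∈ Cstar, (q * p + 1) := by
          rw [Finset.sum_const, smul_eq_mul]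
      _ ≤ ∑ i ∈ Cstar, ∑ j : Fin (q + 1), deg Astar (Vtx.path i j) ⌈/⌉ k :=
          Finset.sum_le_sum hsum
      _ = ∑ x ∈ Cstar ×ˢ (Finset.univ : Finset (Fin (q + 1))),
            deg Astar (Vtx.path x.1 x.2) ⌈/⌉ k := by rw [Finset.sum_product]
      _ = ∑ v ∈ (Cstar ×ˢ (Finset.univ : Finset (Fin (q + 1)))).image
            (fun x : ι × Fin (q + 1) => (Vtx.path x.1 x.2 : Vtx U ι q)), deg Astar v ⌈/⌉ k := by
          rw [Finset.sum_image hinj]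
      _ ≤ obj k Astar := Finset.sum_le_sum_of_subset (Finset.subset_univ _)
  -- |U| ≤ ∑ |Sets i|
  have hUcard : Fintype.card U ≤ ∑ i : ι, (Sets i).card := by
    choose g hg using hU
    calc Fintype.card U = (Finset.univ : Finset U).card := Finset.card_univ.symm
      _ ≤ ((Finset.univ : Finset ι).sigma fun i => Sets i).card := by
          apply Finset.card_le_card_of_injOn (fun u => (⟨g u, u⟩ : Σ _ : ι, U))
          · exact fun u _ => Finset.mem_sigma.2 ⟨Finset.mem_univ _, hg u⟩
          · intro a _ b _ h
            exact congrArg (fun s : (Σ _ : ι, U) => s.snd) h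
      _ = ∑ i : ι, (Sets i).card := by rw [Finset.card_sigma]
  have hCcard : 𝒞.card ≤ Fintype.card ι := (Finset.card_le_univ 𝒞).trans_eq Finset.card_univ
  have hmin' := hmin B hBsub hBfeas
  -- final arithmetic
  by_contra hcon
  push_neg at hcon
  set X := q * p with hX
  have hqX : q ≤ X := Nat.le_mul_of_pos_right q (by omega)
  have h1 : (𝒞.card + 1) * (X + 1) ≤ Cstar.card * (X + 1) :=
    Nat.mul_le_mul_right _ (by omega)
  have h3 : obj k B ≤ 2 * Fintype.card U + 𝒞.card * (X + p + 1) := by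
    have he : (q + 1) * p + 1 = X + p + 1 := by rw [hX]; ring
    rw [← he]; exact hUb
  have H : 𝒞.card * X + X + 𝒞.card + 1 ≤
      2 * Fintype.card U + (𝒞.card * X + 𝒞.card * p + 𝒞.card) := by
    have e1 : (𝒞.card + 1) * (X + 1) = 𝒞.card * X + X + 𝒞.card + 1 := by ring
    have e2 : 𝒞.card * (X + p + 1) = 𝒞.card * X + 𝒞.card * p + 𝒞.card := by ring
    rw [← e1, ← e2]
    exact h1.trans (hLb.trans (hmin'.trans h3))
  have e3 : 𝒞.card * p ≤ 𝒞.card * 2 := Nat.mul_le_mul_left _ hp2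
  generalize 𝒞.card * X = a at H
  generalize hb : 𝒞.card * p = b at H e3
  omega
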